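/- Let F : N → M be a smooth map between smooth manifolds of the same dimension, and let 𝒮 ⊆ N be the set of points where the differential of F is singular. Then F(𝒮) has measure zero in M; in particular, if U ⊆ M is a nonempty open set, then U is not contained in F(𝒮), i.e., U ∖ F(𝒮) is nonempty. -/

import Mathlib

open MeasureTheory Set
open scoped Manifold

section aux

variable {n : ℕ}

local notation "E" => EuclideanSpace ℝ (Fin n)

/-- If a continuous linear endomorphism of a finite-dimensional space is not bijective, its
determinant vanishes. -/
lemma det_eq_zero_of_not_bijective (f : E →L[ℝ] E) (hf : ¬ Function.Bijective f) :
    f.det = 0 := by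
  by_contra h
  exact hf ((LinearMap.equivOfDetNeZero (f : E →ₗ[ℝ] E) h).bijective)

end aux

theorem sard_critical_values_measure_zero
    {n : ℕ} {N M : Type*}
    [TopologicalSpace N] [ChartedSpace (EuclideanSpace ℝ (Fin n)) N]
    [IsManifold (𝓡 n) (⊤ : ℕ∞) N] [T2Space N] [SecondCountableTopology N]
    [TopologicalSpace M] [ChartedSpace (EuclideanSpace ℝ (Fin n)) M]
    [IsManifold (𝓡 n) (⊤ : ℕ∞) M] [T2Space M] [SecondCountableTopology M]
    (F : N → M) (hF : ContMDiff (𝓡 n) (𝓡 n) (⊤ : ℕ∞) F)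
    (S : Set N) (hS : S = {x : N | ¬ Function.Bijective (mfderiv (𝓡 n) (𝓡 n) F x)}) :
    (∀ y : M, volume ((extChartAt (𝓡 n) y) ''
        (F '' S ∩ (extChartAt (𝓡 n) y).source)) = 0) ∧
    (∀ U : Set M, IsOpen U → U.Nonempty → (U \ F '' S).Nonempty) := by
  have main : ∀ y : M, volume ((extChartAt (𝓡 n) y) ''
      (F '' S ∩ (extChartAt (𝓡 n) y).source)) = 0 := by
    intro y
    set I := 𝓡 n
    set ψ := extChartAt I y with hψdef
    set t := ψ.source with htdef
    have ht_open : IsOpen t := isOpen_extChartAt_source y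
    set A : Set N := S ∩ F ⁻¹' t with hAdef
    have hnb : ∀ x ∈ A, ((extChartAt I x).source ∩ F ⁻¹' t) ∈ nhdsWithin x A := by
      intro x hx
      apply nhdsWithin_le_nhds
      exact Filter.inter_mem (extChartAt_source_mem_nhds x)
        (hF.continuous.continuousAt.preimage_mem_nhds (ht_open.mem_nhds hx.2))
    obtain ⟨c, hcA, hcct, hccov⟩ := TopologicalSpace.countable_cover_nhdsWithin hnb
    -- each localized piece has measure zero
    have key : ∀ x' ∈ c, volume ((⇑ψ ∘ F ∘ ⇑(extChartAt I x').symm) ''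
        ((extChartAt I x') '' (A ∩ ((extChartAt I x').source ∩ F ⁻¹' t)))) = 0 := by
      intro x' _
      set φ := extChartAt I x' with hφdef
      set s0 : Set (EuclideanSpace ℝ (Fin n)) := φ '' (A ∩ (φ.source ∩ F ⁻¹' t)) with hs0def
      set f' : EuclideanSpace ℝ (Fin n) → (EuclideanSpace ℝ (Fin n) →L[ℝ] EuclideanSpace ℝ (Fin n)) :=
        fun p => ((mfderiv I I ψ (F (φ.symm p))).comp
          ((mfderiv I I F (φ.symm p)).comp
            (mfderivWithin I I φ.symm (Set.range I) p))) with hf'def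
      apply addHaar_image_eq_zero_of_det_fderivWithin_eq_zero volume (f' := f')
      · rintro p ⟨x, hx, rfl⟩
        have hxs : x ∈ φ.source := hx.2.1
        have hpt : φ x ∈ φ.target := φ.map_source hxs
        have hsymm : φ.symm (φ x) = x := φ.left_inv hxs
        have D1 : HasMFDerivWithinAt I I φ.symm s0 (φ x)
            (mfderivWithin I I φ.symm (Set.range I) (φ x)) := by
          have := (mdifferentiableWithinAt_extChartAt_symm hpt).hasMFDerivWithinAt
          exact this.mono (by simp [I.range_eq_univ])
        have D2 : HasMFDerivAt I I F (φ.symm (φ x)) (mfderiv I I F (φ.symm (φ x))) :=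
          ((hF (φ.symm (φ x))).mdifferentiableAt (by simp)).hasMFDerivAt
        have D3 : HasMFDerivAt I I ψ (F (φ.symm (φ x))) (mfderiv I I ψ (F (φ.symm (φ x)))) := by
          apply (mdifferentiableAt_extChartAt _).hasMFDerivAt
          rw [hsymm, ← extChartAt_source I]
          exact hx.2.2
        have comb := (D3.comp _ D2).comp_hasMFDerivWithinAt _ D1
        exact hasMFDerivWithinAt_iff_hasFDerivWithinAt.mp comb
      · rintro p ⟨x, hx, rfl⟩
        have hxs : x ∈ φ.source := hx.2.1
        have hsymm : φ.symm (φ x) = x := φ.left_inv hxs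
        have hxS : x ∈ S := hx.1.1
        have hbij : ¬ Function.Bijective (mfderiv I I F (φ.symm (φ x))) := by
          rw [hsymm, hS] at *; exact hxS
        have h2 := det_eq_zero_of_not_bijective (mfderiv I I F (φ.symm (φ x))) hbij
        show (f' (φ x)).det = 0
        simp only [hf'def, ContinuousLinearMap.det, ContinuousLinearMap.coe_comp,
          LinearMap.det_comp]
        have hdet : ∀ P Q R : EuclideanSpace ℝ (Fin n) →L[ℝ] EuclideanSpace ℝ (Fin n),
            (P.comp (Q.comp R)).det = P.det * (Q.det * R.det) := by
          intro P Q R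
          simp only [ContinuousLinearMap.det, ContinuousLinearMap.coe_comp, LinearMap.det_comp]
          show LinearMap.det ((P : EuclideanSpace ℝ (Fin n) →ₗ[ℝ] EuclideanSpace ℝ (Fin n)) ∘ₗ
            ((Q : EuclideanSpace ℝ (Fin n) →ₗ[ℝ] EuclideanSpace ℝ (Fin n)) ∘ₗ
              (R : EuclideanSpace ℝ (Fin n) →ₗ[ℝ] EuclideanSpace ℝ (Fin n)))) = _
          rw [LinearMap.det_comp, LinearMap.det_comp]
        exact (hdet _ _ _).trans (mul_eq_zero_of_right _ (mul_eq_zero_of_left h2 _))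
    -- inclusion of the target set in the union of the pieces
    have hincl : ψ '' (F '' S ∩ t) ⊆ ⋃ x' ∈ c, (⇑ψ ∘ F ∘ ⇑(extChartAt I x').symm) ''
        ((extChartAt I x') '' (A ∩ ((extChartAt I x').source ∩ F ⁻¹' t))) := by
      rintro z ⟨w, ⟨⟨x, hxS, rfl⟩, hwt⟩, rfl⟩
      have hxA : x ∈ A := ⟨hxS, hwt⟩
      obtain ⟨x', hx'c, hxv⟩ := Set.mem_iUnion₂.mp (hccov hxA)
      refine Set.mem_iUnion₂.mpr ⟨x', hx'c, ⟨extChartAt I x' x, ⟨x, ⟨hxA, hxv⟩, rfl⟩, ?_⟩⟩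
      simp only [Function.comp_apply, (extChartAt I x').left_inv hxv.1]
    refine le_antisymm ?_ zero_le
    calc volume (ψ '' (F '' S ∩ t)) ≤ volume (⋃ x' ∈ c, (⇑ψ ∘ F ∘ ⇑(extChartAt I x').symm) ''
        ((extChartAt I x') '' (A ∩ ((extChartAt I x').source ∩ F ⁻¹' t)))) := measure_mono hincl
      _ = 0 := measure_biUnion_null_iff hcct |>.mpr key
  refine ⟨main, ?_⟩
  intro U hU hUne
  by_contra h
  rw [Set.not_nonempty_iff_eq_empty, Set.diff_eq_empty] at h
  obtain ⟨y, hyU⟩ := hUne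
  set ψ := extChartAt (𝓡 n) y with hψ
  have hV : IsOpen (ψ '' (ψ.source ∩ U)) := by
    rw [ψ.image_source_inter_eq]
    exact (continuousOn_extChartAt_symm y).isOpen_inter_preimage (isOpen_extChartAt_target y) ((isOpen_extChartAt_source y).inter hU)
  have hVne : (ψ '' (ψ.source ∩ U)).Nonempty :=
    ⟨ψ y, Set.mem_image_of_mem _ ⟨mem_extChartAt_source y, hyU⟩⟩
  have hVzero : volume (ψ '' (ψ.source ∩ U)) = 0 := by
    refine measure_mono_null ?_ (main y)
    apply Set.image_mono
    rintro z ⟨hz1, hz2⟩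
    exact ⟨h hz2, hz1⟩
  exact (hV.measure_pos volume hVne).ne' hVzero
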